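/- Let k ≥ 7 be an odd integer. Every cocircuit of the matroid N_k / {e_1, e_2} has at least 4 elements. -/

import Mathlib

open Set

namespace Matroid

variable {α : Type}

/-- Deletion of a set from a matroid. -/
def delete' (M : Matroid α) (D : Set α) : Matroid α := M ↾ (M.E \ D)

/-- Contraction of a set in a matroid. -/
def contract' (M : Matroid α) (C : Set α) : Matroid α := (M✶.delete' C)✶

/-- A circuit: a minimal dependent set. -/
def IsCircuit' (M : Matroid α) (C : Set α) : Prop :=
  M.Dep C ∧ ∀ D, D ⊂ C → M.Indep D

/-- A cocircuit: a circuit of the dual. -/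
def IsCocircuit' (M : Matroid α) (C : Set α) : Prop := M✶.IsCircuit' C

/-- A hyperplane: a flat whose rank is one less than the rank of the matroid. -/
def IsHyperplane (M : Matroid α) (H : Set α) : Prop :=
  M.IsFlat H ∧ ∃ I B, M.IsBasis I H ∧ M.IsBase B ∧ I.encard + 1 = B.encard

/-- A circuit-hyperplane: a set that is both a circuit and a hyperplane. -/
def IsCircuitHyperplane (M : Matroid α) (C : Set α) : Prop :=
  M.IsCircuit' C ∧ M.IsHyperplane C

/-- A free basis: a basis `B` such that `B ∪ {e}` is a circuit for every `e ∈ E(M) - B`. -/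
def IsFreeBase (M : Matroid α) (B : Set α) : Prop :=
  M.IsBase B ∧ ∀ e ∈ M.E \ B, M.IsCircuit' (insert e B)

/-- A connected matroid: the ground set is nonempty and every two distinct elements of the
ground set lie in a common circuit. -/
def IsConnected (M : Matroid α) : Prop :=
  M.E.Nonempty ∧ ∀ x ∈ M.E, ∀ y ∈ M.E, x ≠ y → ∃ C, M.IsCircuit' C ∧ x ∈ C ∧ y ∈ C

/-- `M` is a frame matroid: there is a matroid `M'` whose ground set is the union of (a copy of)
`E(M)` and a set `V` disjoint from it, such that `V` is a basis of `M'`, deleting `V` from `M'`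
yields (the copy of) `M`, and for every `e ∈ E(M)` the unique circuit of `M'` contained in
`V ∪ {e}` has at most three elements. -/
def IsFrame (M : Matroid α) : Prop :=
  ∃ (β : Type) (M' : Matroid (α ⊕ β)) (V : Set (α ⊕ β)),
    M'.Finite ∧
    M'.E = (Sum.inl '' M.E) ∪ V ∧
    Disjoint (Sum.inl '' M.E) V ∧
    M'.IsBase V ∧
    M'.delete' V = M.map Sum.inl Sum.inl_injective.injOn ∧
    ∀ e ∈ M.E, ∃ C, M'.IsCircuit' C ∧ C ⊆ insert (Sum.inl e) V ∧ C.encard ≤ 3 ∧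
      ∀ C', M'.IsCircuit' C' → C' ⊆ insert (Sum.inl e) V → C' = C

/-- `N` is a graphic matroid: there are a set `W` of vertices and an assignment of an unordered
pair of vertices to each element of the ground set, such that a subset `I` of the ground set is
independent exactly when every nonempty `J ⊆ I` uses strictly more vertices than it has edges
(i.e. the associated multigraph is a forest). -/
def IsGraphic (N : Matroid α) : Prop :=
  ∃ (W : Type) (f : α → Sym2 W),
    ∀ I : Set α, N.Indep I ↔ (I ⊆ N.E ∧ ∀ J ⊆ I, J.Nonempty →
      J.encard < {w : W | ∃ e ∈ J, w ∈ f e}.encard)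

/-- `M` is a lifted-graphic matroid: there is a matroid `M'` whose ground set is (a copy of)
`E(M)` plus one extra element `f`, such that `M' \ f = M` and `M' / f` is graphic. -/
def IsLiftedGraphic (M : Matroid α) : Prop :=
  ∃ M' : Matroid (α ⊕ Unit),
    M'.Finite ∧
    M'.E = (Sum.inl '' M.E) ∪ {Sum.inr ()} ∧
    M'.delete' {Sum.inr ()} = M.map Sum.inl Sum.inl_injective.injOn ∧
    (M'.contract' {Sum.inr ()}).IsGraphic

/-- `M` and `N` are isomorphic matroids. -/
def Iso' {β : Type} (M : Matroid α) (N : Matroid β) : Prop :=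
  ∃ (f : α → β) (hf : Set.InjOn f M.E), M.map f hf = N

end Matroid

section Graphs

/-- The edges of the graph `G_k`: `a i`, `b i`, `c i`, `d i` for `i : Fin k`
(with `i` representing the index `i+1` of the paper), together with `e1` and `e2`. -/
inductive Edge (k : ℕ) : Type where
  | a : Fin k → Edge k
  | b : Fin k → Edge k
  | c : Fin k → Edge k
  | d : Fin k → Edge k
  | e1 : Edge k
  | e2 : Edge k
deriving DecidableEq

/-- The vertices of `G_k`: `Sum.inl (i, false)` is `x_{i+1}` (so `Sum.inl (0, false)` is `s_1`),
`Sum.inl (i, true)` is `y_{i+1}` (so `Sum.inl (0, true)` is `s_2`), `Sum.inr false` is `t_1` and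
`Sum.inr true` is `t_2`.  There are `2k+2` vertices in all. -/
abbrev Vertex (k : ℕ) := (Fin k × Bool) ⊕ Bool

variable {k : ℕ}

/-- The tail of each edge of `G_k`. -/
def Edge.tail [NeZero k] : Edge k → Vertex k
  | .a i => .inl (i, false)
  | .b i => .inl (i, false)
  | .c i => .inl (i, true)
  | .d i => .inl (i, true)
  | .e1 => .inl (0, false)
  | .e2 => .inl (0, true)

/-- The head of each edge of `G_k`; the head `x_1` is the vertex `t_1 = Sum.inr false` and
the head `y_1` is the vertex `t_2 = Sum.inr true`. -/
def Edge.head [NeZero k] : Edge k → Vertex k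
  | .a i => if i + 1 = 0 then .inr false else .inl (i + 1, false)
  | .b i => if i + 1 = 0 then .inr true else .inl (i + 1, true)
  | .c i => if i + 1 = 0 then .inr false else .inl (i + 1, false)
  | .d i => if i + 1 = 0 then .inr true else .inl (i + 1, true)
  | .e1 => .inr false
  | .e2 => .inr true

/-- The set `P = {a_1, …, a_k, d_1, …, d_k}`. -/
def Pset (k : ℕ) : Set (Edge k) := {e | ∃ i, e = .a i ∨ e = .d i}

/-- The set `Q = {b_1, …, b_k, c_1, …, c_k}`. -/
def Qset (k : ℕ) : Set (Edge k) := {e | ∃ i, e = .b i ∨ e = .c i}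

/-- The last index of `Fin k`, representing the paper's index `k`. -/
def lastIdx (k : ℕ) [NeZero k] : Fin k :=
  ⟨k - 1, Nat.sub_lt (Nat.pos_of_ne_zero (NeZero.ne k)) Nat.one_pos⟩

/-- The group labels for the frame construction: `γ(a_k) = γ(b_k) = γ(c_k) = γ(d_k) = 2` and
`γ(e) = 1` for every other edge. -/
def gammaF [NeZero k] : Edge k → ℝ
  | .a i => if i = lastIdx k then 2 else 1
  | .b i => if i = lastIdx k then 2 else 1
  | .c i => if i = lastIdx k then 2 else 1
  | .d i => if i = lastIdx k then 2 else 1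
  | .e1 => 1
  | .e2 => 1

/-- The matrix `A_k` of the frame construction, with rows indexed by the vertices of `G_k` and
columns by its edges: the column of an edge `e` has entry `1` in the row of the tail of `e`,
entry `-γ(e)` in the row of the head of `e`, and `0` elsewhere. -/
def frameMatrix (k : ℕ) [NeZero k] : Matrix (Vertex k) (Edge k) ℝ :=
  fun v e => if v = e.tail then 1 else if v = e.head then -gammaF e else 0

/-- The group labels for the lifted construction: `γ(a_i) = γ(d_i) = 1` for all `i` and
`γ(e) = 0` for every other edge. -/
def gammaL : Edge k → ℝ
  | .a _ => 1
  | .d _ => 1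
  | _ => 0

/-- The matrix `A_k^L` of the lifted construction, with rows indexed by the vertices of `G_k`
together with one additional row: the column of an edge `e` has entry `1` in the row of the tail
of `e`, entry `-1` in the row of the head of `e`, entry `γ(e)` in the additional row, and `0`
elsewhere. -/
def liftMatrix (k : ℕ) [NeZero k] : Matrix (Vertex k ⊕ Unit) (Edge k) ℝ :=
  fun v e => match v with
  | .inl v => if v = e.tail then 1 else if v = e.head then -1 else 0
  | .inr _ => gammaL e

/-- `N` is the matroid on the column index set of the matrix `A` in which a set is independent
if and only if the corresponding columns of `A` are linearly independent over `ℝ`. -/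
def IsColMatroid {m n : Type} (A : Matrix m n ℝ) (N : Matroid n) : Prop :=
  N.E = Set.univ ∧
  ∀ I : Set n, N.Indep I ↔ LinearIndependent ℝ (fun e : I => fun v : m => A v (e : n))

/-- The vertex of the contracted graph `G_k / {e_1, e_2}` corresponding to a vertex of `G_k`:
`t_1` is identified with `s_1` and `t_2` with `s_2`, leaving the `2k` vertices `Fin k × Bool`. -/
def contractVertex [NeZero k] : Vertex k → Fin k × Bool
  | .inl p => p
  | .inr b => (0, b)

/-- The tail, in `G_k / {e_1, e_2}`, of an edge. -/
def Edge.ctail [NeZero k] (e : Edge k) : Fin k × Bool := contractVertex e.tail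

/-- The head, in `G_k / {e_1, e_2}`, of an edge. -/
def Edge.chead [NeZero k] (e : Edge k) : Fin k × Bool := contractVertex e.head

/-- `v` is a vertex of the subgraph of `G_k / {e_1, e_2}` formed by the edge set `S`. -/
def Touches [NeZero k] (S : Set (Edge k)) (v : Fin k × Bool) : Prop :=
  ∃ e ∈ S, e.ctail = v ∨ e.chead = v

/-- The degree of the vertex `v` in the subgraph of `G_k / {e_1, e_2}` with edge set `S`. -/
noncomputable def degreeIn [NeZero k] (S : Set (Edge k)) (v : Fin k × Bool) : ℕ :=
  {e ∈ S | e.ctail = v}.ncard + {e ∈ S | e.chead = v}.ncard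

/-- The edge set `S` forms a cycle of the multigraph `G_k / {e_1, e_2}`: the subgraph it
spans is connected and `2`-regular. -/
def IsCycleIn [NeZero k] (S : Set (Edge k)) : Prop :=
  S.Nonempty ∧ Edge.e1 ∉ S ∧ Edge.e2 ∉ S ∧
  (∀ v, Touches S v → degreeIn S v = 2) ∧
  (∀ T ⊆ S, T.Nonempty → (S \ T).Nonempty → ∃ v, Touches T v ∧ Touches (S \ T) v)

/-- The star `δ_G(v)` of a vertex `v` of the contracted graph `G_k / {e_1, e_2}`:
all edges of that graph incident with `v`. -/
def contractStar (k : ℕ) [NeZero k] (v : Fin k × Bool) : Set (Edge k) :=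
  {e | e ≠ .e1 ∧ e ≠ .e2 ∧ (e.ctail = v ∨ e.chead = v)}

/-- The star `δ(v)` of a vertex `v` of the graph `G_k`: all edges of `G_k` incident with `v`. -/
def star (k : ℕ) [NeZero k] (v : Vertex k) : Set (Edge k) :=
  {e | e.tail = v ∨ e.head = v}

end Graphs

section FrameHelpers

open Set

variable {k : ℕ} [NeZero k]

/-- The column of the edge `e` in the frame matrix. -/
noncomputable def colv (k : ℕ) [NeZero k] (e : Edge k) : Vertex k → ℝ :=
  fun v => frameMatrix k v e

/-- The difference of the basis vectors of `x_{i+1}` and `y_{i+1}`. -/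
noncomputable def uvec (k : ℕ) [NeZero k] (i : Fin k) : Vertex k → ℝ :=
  fun v => if v = Sum.inl (i, false) then 1 else if v = Sum.inl (i, true) then -1 else 0

noncomputable def gam (k : ℕ) [NeZero k] (i : Fin k) : ℝ := if i = lastIdx k then 2 else 1

noncomputable def corr (k : ℕ) [NeZero k] (i : Fin k) : Vertex k → ℝ :=
  if i = lastIdx k then (2 : ℝ) • (colv k Edge.e2 - colv k Edge.e1) else 0

lemma lastIdx_add_one : lastIdx k + 1 = 0 := by
  have hk : 0 < k := Nat.pos_of_ne_zero (NeZero.ne k)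
  apply Fin.ext
  rw [Fin.val_add, Fin.val_one', Fin.val_zero]
  show ((k - 1) + 1 % k) % k = 0
  rcases Nat.lt_or_ge 1 k with h | h
  · rw [Nat.mod_eq_of_lt h, Nat.sub_add_cancel (by omega : 1 ≤ k), Nat.mod_self]
  · have hk1 : k = 1 := le_antisymm h hk
    subst hk1; rfl

lemma add_one_eq_zero_iff {i : Fin k} : i + 1 = 0 ↔ i = lastIdx k :=
  ⟨fun h => add_right_cancel (h.trans lastIdx_add_one.symm), fun h => h ▸ lastIdx_add_one⟩

lemma fin_one_ne_zero (hk2 : 2 ≤ k) : (1 : Fin k) ≠ 0 := by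
  intro h
  have h' := congrArg Fin.val h
  rw [Fin.val_one', Fin.val_zero, Nat.mod_eq_of_lt hk2] at h'
  exact one_ne_zero h'

lemma fin_ne_add_one (hk2 : 2 ≤ k) (i : Fin k) : i ≠ i + 1 := by
  intro h
  exact fin_one_ne_zero hk2 (left_eq_add.mp h)

lemma lastIdx_ne_zero (hk2 : 2 ≤ k) : lastIdx k ≠ 0 := by
  intro h
  have h' := congrArg Fin.val h
  rw [Fin.val_zero] at h'
  have : (lastIdx k).val = k - 1 := rfl
  omega

lemma col_a_sub_c (hk2 : 2 ≤ k) (i : Fin k) :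
    colv k (Edge.a i) - colv k (Edge.c i) = uvec k i := by
  have hii := fin_ne_add_one hk2 i
  funext v
  simp only [colv, frameMatrix, uvec, Edge.tail, Edge.head, gammaF, Pi.sub_apply]
  by_cases h0 : i + 1 = 0 <;> simp only [h0, if_true, if_false] <;>
  split_ifs <;> simp_all [fin_ne_add_one hk2 i, (fin_ne_add_one hk2 i).symm] <;> ring

lemma col_b_sub_d (hk2 : 2 ≤ k) (i : Fin k) :
    colv k (Edge.b i) - colv k (Edge.d i) = uvec k i := by
  have hii := fin_ne_add_one hk2 i
  funext v
  simp only [colv, frameMatrix, uvec, Edge.tail, Edge.head, gammaF, Pi.sub_apply]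
  by_cases h0 : i + 1 = 0 <;> simp only [h0, if_true, if_false] <;>
  split_ifs <;> simp_all [fin_ne_add_one hk2 i, (fin_ne_add_one hk2 i).symm] <;> ring

lemma col_b_sub_a (hk2 : 2 ≤ k) (i : Fin k) :
    colv k (Edge.b i) - colv k (Edge.a i) = gam k i • uvec k (i + 1) + corr k i := by
  have hii := fin_ne_add_one hk2 i
  have hL := lastIdx_ne_zero hk2
  by_cases hl : i = lastIdx k
  · subst hl
    funext v
    simp only [colv, frameMatrix, uvec, gam, corr, Edge.tail, Edge.head, gammaF,
      lastIdx_add_one, if_pos rfl, Pi.sub_apply, Pi.add_apply, Pi.smul_apply, smul_eq_mul]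
    split_ifs <;> simp_all [colv, frameMatrix, Edge.tail, Edge.head, gammaF] <;> ring
  · have h0 : ¬ (i + 1 = 0) := fun h => hl (add_one_eq_zero_iff.mp h)
    funext v
    simp only [colv, frameMatrix, uvec, gam, corr, Edge.tail, Edge.head, gammaF,
      if_neg h0, if_neg hl, Pi.sub_apply, Pi.add_apply, Pi.smul_apply, smul_eq_mul,
      Pi.zero_apply]
    split_ifs <;> simp_all [colv, frameMatrix, Edge.tail, Edge.head, gammaF] <;> ring

lemma col_d_sub_c (hk2 : 2 ≤ k) (i : Fin k) :
    colv k (Edge.d i) - colv k (Edge.c i) = gam k i • uvec k (i + 1) + corr k i := by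
  have hii := fin_ne_add_one hk2 i
  have hL := lastIdx_ne_zero hk2
  by_cases hl : i = lastIdx k
  · subst hl
    funext v
    simp only [colv, frameMatrix, uvec, gam, corr, Edge.tail, Edge.head, gammaF,
      lastIdx_add_one, if_pos rfl, Pi.sub_apply, Pi.add_apply, Pi.smul_apply, smul_eq_mul]
    split_ifs <;> simp_all [colv, frameMatrix, Edge.tail, Edge.head, gammaF] <;> ring
  · have h0 : ¬ (i + 1 = 0) := fun h => hl (add_one_eq_zero_iff.mp h)
    funext v
    simp only [colv, frameMatrix, uvec, gam, corr, Edge.tail, Edge.head, gammaF,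
      if_neg h0, if_neg hl, Pi.sub_apply, Pi.add_apply, Pi.smul_apply, smul_eq_mul,
      Pi.zero_apply]
    split_ifs <;> simp_all [colv, frameMatrix, Edge.tail, Edge.head, gammaF] <;> ring

lemma mem_of_sub_fst {V : Type} [AddCommGroup V] [Module ℝ V] {M0 : Submodule ℝ V} {A C u : V}
    (h : A - C = u) (hu : u ∈ M0) (hc : C ∈ M0) : A ∈ M0 := by
  have h2 : (A - C) + C ∈ M0 := add_mem (by rw [h]; exact hu) hc
  rwa [sub_add_cancel] at h2

lemma mem_of_sub_snd {V : Type} [AddCommGroup V] [Module ℝ V] {M0 : Submodule ℝ V} {A C u : V}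
    (h : A - C = u) (hu : u ∈ M0) (ha : A ∈ M0) : C ∈ M0 := by
  have h2 : A - (A - C) ∈ M0 := sub_mem ha (by rw [h]; exact hu)
  rwa [sub_sub_cancel] at h2

lemma colv_mem_span (hk2 : 2 ≤ k) (C : Set (Edge k))
    (he1 : Edge.e1 ∉ C) (he2 : Edge.e2 ∉ C)
    (hfour : ∀ x1 x2 x3 x4 : Edge k, x1 ∈ C → x2 ∈ C → x3 ∈ C → x4 ∈ C →
      x1 ≠ x2 → x1 ≠ x3 → x1 ≠ x4 → x2 ≠ x3 → x2 ≠ x4 → x3 ≠ x4 → False)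
    (e : Edge k) : colv k e ∈ Submodule.span ℝ (colv k '' (Set.univ \ C)) := by
  set M0 := Submodule.span ℝ (colv k '' (Set.univ \ C)) with hM0
  have hmem : ∀ f : Edge k, f ∉ C → colv k f ∈ M0 :=
    fun f hf => Submodule.subset_span ⟨f, ⟨Set.mem_univ f, hf⟩, rfl⟩
  have hcorr : ∀ i : Fin k, corr k i ∈ M0 := by
    intro i
    unfold corr
    split_ifs
    · exact Submodule.smul_mem _ _ (sub_mem (hmem _ he2) (hmem _ he1))
    · exact Submodule.zero_mem _
  have hgam : ∀ i : Fin k, gam k i ≠ 0 := by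
    intro i; unfold gam; split_ifs <;> norm_num
  -- Step 1: every `uvec` is in the span.
  have hu : ∀ i : Fin k, uvec k i ∈ M0 := by
    intro i
    by_cases hac : Edge.a i ∉ C ∧ Edge.c i ∉ C
    · rw [← col_a_sub_c hk2 i]
      exact sub_mem (hmem _ hac.1) (hmem _ hac.2)
    by_cases hbd : Edge.b i ∉ C ∧ Edge.d i ∉ C
    · rw [← col_b_sub_d hk2 i]
      exact sub_mem (hmem _ hbd.1) (hmem _ hbd.2)
    set j : Fin k := i - 1 with hj
    have hji : j + 1 = i := sub_add_cancel i 1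
    have hij : i ≠ j := by
      intro h
      exact fin_ne_add_one hk2 j (by rw [hji, ← h])
    have key : gam k j • uvec k i ∈ M0 → uvec k i ∈ M0 := by
      intro hmem'
      have h2 := Submodule.smul_mem M0 (gam k j)⁻¹ hmem'
      rwa [smul_smul, inv_mul_cancel₀ (hgam j), one_smul] at h2
    by_cases hab : Edge.a j ∉ C ∧ Edge.b j ∉ C
    · apply key
      have h1 : gam k j • uvec k (j + 1) + corr k j ∈ M0 := by
        rw [← col_b_sub_a hk2 j]
        exact sub_mem (hmem _ hab.2) (hmem _ hab.1)
      have h2 : gam k j • uvec k (j + 1) + corr k j - corr k j ∈ M0 := sub_mem h1 (hcorr j)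
      rw [add_sub_cancel_right, hji] at h2
      exact h2
    by_cases hcd : Edge.c j ∉ C ∧ Edge.d j ∉ C
    · apply key
      have h1 : gam k j • uvec k (j + 1) + corr k j ∈ M0 := by
        rw [← col_d_sub_c hk2 j]
        exact sub_mem (hmem _ hcd.2) (hmem _ hcd.1)
      have h2 : gam k j • uvec k (j + 1) + corr k j - corr k j ∈ M0 := sub_mem h1 (hcorr j)
      rw [add_sub_cancel_right, hji] at h2
      exact h2
    · exfalso
      rw [not_and_or, not_not, not_not] at hac hbd hab hcd
      rcases hac with h1 | h1 <;> rcases hbd with h2 | h2 <;>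
        rcases hab with h3 | h3 <;> rcases hcd with h4 | h4 <;>
        exact hfour _ _ _ _ h1 h2 h3 h4 (by simp) (by simp [hij]) (by simp [hij])
          (by simp [hij]) (by simp [hij]) (by simp)
  -- Step 2: every column is in the span.
  by_cases heC : e ∈ C
  swap
  · exact hmem e heC
  have hblock : ∀ i : Fin k,
      (Edge.a i ∉ C ∨ Edge.b i ∉ C ∨ Edge.c i ∉ C ∨ Edge.d i ∉ C) →
      colv k (Edge.a i) ∈ M0 ∧ colv k (Edge.b i) ∈ M0 ∧
      colv k (Edge.c i) ∈ M0 ∧ colv k (Edge.d i) ∈ M0 := by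
    intro i hcase
    have hXi : gam k i • uvec k (i + 1) + corr k i ∈ M0 :=
      add_mem (Submodule.smul_mem _ _ (hu (i + 1))) (hcorr i)
    have hui := hu i
    have hAC := col_a_sub_c hk2 i
    have hBD := col_b_sub_d hk2 i
    have hBA := col_b_sub_a hk2 i
    rcases hcase with h | h | h | h
    · have ha := hmem _ h
      have hb := mem_of_sub_fst hBA hXi ha
      exact ⟨ha, hb, mem_of_sub_snd hAC hui ha, mem_of_sub_snd hBD hui hb⟩
    · have hb := hmem _ h
      have ha := mem_of_sub_snd hBA hXi hb
      exact ⟨ha, hb, mem_of_sub_snd hAC hui ha, mem_of_sub_snd hBD hui hb⟩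
    · have hc := hmem _ h
      have ha := mem_of_sub_fst hAC hui hc
      have hb := mem_of_sub_fst hBA hXi ha
      exact ⟨ha, hb, hc, mem_of_sub_snd hBD hui hb⟩
    · have hd := hmem _ h
      have hb := mem_of_sub_fst hBD hui hd
      have ha := mem_of_sub_snd hBA hXi hb
      exact ⟨ha, hb, mem_of_sub_snd hAC hui ha, hd⟩
  cases e with
  | e1 => exact absurd heC he1
  | e2 => exact absurd heC he2
  | a i =>
    refine (hblock i ?_).1
    by_contra hcon
    push_neg at hcon
    exact hfour _ _ _ _ hcon.1 hcon.2.1 hcon.2.2.1 hcon.2.2.2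
      (by simp) (by simp) (by simp) (by simp) (by simp) (by simp)
  | b i =>
    refine (hblock i ?_).2.1
    by_contra hcon
    push_neg at hcon
    exact hfour _ _ _ _ hcon.1 hcon.2.1 hcon.2.2.1 hcon.2.2.2
      (by simp) (by simp) (by simp) (by simp) (by simp) (by simp)
  | c i =>
    refine (hblock i ?_).2.2.1
    by_contra hcon
    push_neg at hcon
    exact hfour _ _ _ _ hcon.1 hcon.2.1 hcon.2.2.1 hcon.2.2.2
      (by simp) (by simp) (by simp) (by simp) (by simp) (by simp)
  | d i =>
    refine (hblock i ?_).2.2.2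
    by_contra hcon
    push_neg at hcon
    exact hfour _ _ _ _ hcon.1 hcon.2.1 hcon.2.2.1 hcon.2.2.2
      (by simp) (by simp) (by simp) (by simp) (by simp) (by simp)

end FrameHelpers

/-- Every cocircuit of `N_k / {e_1, e_2}` has at least `4` elements. -/
theorem cocircuits_of_Nk_contract_large (k : ℕ) [NeZero k] (hk : 7 ≤ k) (hodd : Odd k)
    (N : Matroid (Edge k)) (hN : IsColMatroid (frameMatrix k) N) :
    ∀ C : Set (Edge k), (N.contract' {Edge.e1, Edge.e2}).IsCocircuit' C → 4 ≤ C.encard := by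
  intro C hC
  by_contra hlt
  rw [not_le] at hlt
  have hk2 : 2 ≤ k := by omega
  obtain ⟨hE, hIndep⟩ := hN
  -- four distinct elements cannot all be in `C`
  have hfour : ∀ x1 x2 x3 x4 : Edge k, x1 ∈ C → x2 ∈ C → x3 ∈ C → x4 ∈ C →
      x1 ≠ x2 → x1 ≠ x3 → x1 ≠ x4 → x2 ≠ x3 → x2 ≠ x4 → x3 ≠ x4 → False := by
    intro x1 x2 x3 x4 h1 h2 h3 h4 d12 d13 d14 d23 d24 d34
    refine absurd hlt (not_lt.mpr ?_)
    have hsub : ({x1, x2, x3, x4} : Set (Edge k)) ⊆ C := by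
      intro x hx
      rcases hx with rfl | rfl | rfl | rfl
      exacts [h1, h2, h3, h4]
    calc (4 : ℕ∞) = ({x1, x2, x3, x4} : Set (Edge k)).encard := by
          rw [Set.encard_insert_of_notMem (by simp [d12, d13, d14]),
            Set.encard_insert_of_notMem (by simp [d23, d24]), Set.encard_pair d34]
          norm_num
      _ ≤ C.encard := Set.encard_mono hsub
  -- unfold the cocircuit hypothesis
  obtain ⟨hdep, -⟩ := hC
  have hd2 : (N.contract' {Edge.e1, Edge.e2})✶ = N✶.restrict (N✶.E \ {Edge.e1, Edge.e2}) :=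
    Matroid.dual_dual (N✶.delete' {Edge.e1, Edge.e2})
  rw [hd2] at hdep
  have hCsub : C ⊆ N✶.E \ {Edge.e1, Edge.e2} := hdep.2
  have he1 : Edge.e1 ∉ C := fun h => (hCsub h).2 (by simp)
  have he2 : Edge.e2 ∉ C := fun h => (hCsub h).2 (by simp)
  have hnotindep : ¬ N✶.Indep C := by
    intro hind
    exact hdep.1 (Matroid.restrict_indep_iff.mpr ⟨hind, hCsub⟩)
  -- construct a base of `N` disjoint from `C`
  set V : Set (Edge k) := Set.univ \ C with hV
  have hVE : V ⊆ N.E := by rw [hE]; exact Set.diff_subset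
  obtain ⟨I, hI⟩ := N.exists_isBasis V hVE
  have hIindep := hI.indep
  have hIlin : LinearIndependent ℝ (fun e : I => colv k (e : Edge k)) := (hIndep I).mp hIindep
  have hall : ∀ e : Edge k, colv k e ∈ Submodule.span ℝ (colv k '' V) :=
    colv_mem_span hk2 C he1 he2 hfour
  have hspanI : ∀ f : Edge k, colv k f ∈ Submodule.span ℝ (colv k '' I) := by
    have hVspan : ∀ f ∈ V, colv k f ∈ Submodule.span ℝ (colv k '' I) := by
      intro f hf
      by_cases hfI : f ∈ I
      · exact Submodule.subset_span ⟨f, hfI, rfl⟩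
      · have hdep' := hI.insert_dep ⟨hf, hfI⟩
        have hnot : ¬ N.Indep (insert f I) := hdep'.1
        rw [hIndep] at hnot
        by_contra hmem
        exact hnot ((linearIndepOn_insert (f := colv k) hfI).mpr ⟨hIlin, hmem⟩)
    intro f
    refine Submodule.span_le.mpr ?_ (hall f)
    rintro _ ⟨g, hg, rfl⟩
    exact hVspan g hg
  have hbase : N.IsBase I := by
    rw [Matroid.isBase_iff_maximal_indep]
    refine ⟨hIindep, fun J hJ hIJ => ?_⟩
    intro e heJ
    by_contra heI
    have hJlin : LinearIndependent ℝ (fun x : J => colv k (x : Edge k)) := (hIndep J).mp hJ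
    have heq : insert e (J \ {e}) = J := by
      rw [Set.insert_diff_singleton]
      exact Set.insert_eq_self.mpr heJ
    rw [← heq] at hJlin
    have he' : e ∉ J \ ({e} : Set (Edge k)) := fun h => h.2 rfl
    replace hJlin := (linearIndepOn_insert (f := colv k) he').mp hJlin
    refine hJlin.2 ?_
    refine Submodule.span_mono (Set.image_mono ?_) (hspanI e)
    exact Set.subset_diff_singleton hIJ heI
  have hdualindep : N✶.Indep C := by
    rw [Matroid.dual_indep_iff_exists']
    refine ⟨by rw [hE]; exact Set.subset_univ C, I, hbase, ?_⟩
    exact Set.disjoint_left.mpr fun x hxC hxI => (hI.subset hxI).2 hxC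
  exact hnotindep hdualindep
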